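/- For every 2π-periodic odd function η ∈ L^{2p}(𝕋) with p ≥ 2 an even integer: ∫₀^{2π}∫₀^{2π} (η(s₁) − η(s₂))^{2p} ds₁ ds₂ ≥ 2^{2p−1} (∫₀^{2π} η(s)^p ds)². -/

import Mathlib

open MeasureTheory Real intervalIntegral Finset

-- even-index binomial sum
lemma evenChooseSum (n : ℕ) (hn : n ≠ 0) :
    (∑ m ∈ Finset.range (n + 1), if Even m then ((n.choose m : ℝ)) else 0)
      = 2 ^ (n - 1) := by
  have h1 : (∑ m ∈ Finset.range (n + 1), ((n.choose m : ℝ))) = 2 ^ n := by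
    exact_mod_cast congrArg (Nat.cast : ℕ → ℝ) (Nat.sum_range_choose n)
  have h2 : (∑ m ∈ Finset.range (n + 1), (-1 : ℝ) ^ m * (n.choose m : ℝ)) = 0 := by
    have := Int.alternating_sum_range_choose_of_ne hn
    have : ((∑ m ∈ Finset.range (n + 1), (-1 : ℤ) ^ m * (n.choose m : ℤ) : ℤ) : ℝ) = 0 := by
      rw [this]; norm_num
    push_cast at this
    simpa using this
  have key : 2 * (∑ m ∈ Finset.range (n + 1), if Even m then ((n.choose m : ℝ)) else 0)
      = 2 ^ n := by
    rw [Finset.mul_sum]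
    have : ∀ m ∈ Finset.range (n + 1),
        2 * (if Even m then ((n.choose m : ℝ)) else 0)
          = (n.choose m : ℝ) + (-1 : ℝ) ^ m * (n.choose m : ℝ) := by
      intro m _
      rcases Nat.even_or_odd m with h | h
      · rw [if_pos h, h.neg_one_pow]; ring
      · rw [if_neg (Nat.not_even_iff_odd.mpr h), h.neg_one_pow]; ring
    rw [Finset.sum_congr rfl this, Finset.sum_add_distrib, h1, h2, add_zero]
  have hpow : (2 : ℝ) ^ n = 2 * 2 ^ (n - 1) := by
    conv_lhs => rw [show n = (n - 1) + 1 by omega]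
    ring
  rw [hpow] at key
  linarith

theorem stmt5 (η : ℝ → ℝ) (p : ℕ) (hp : 2 ≤ p) (hpe : Even p)
    (hmeas : Measurable η)
    (hper : ∀ s, η (s + 2*π) = η s) (hodd : ∀ s, η (-s) = - η s)
    (hint : IntegrableOn (fun s => |η s|^(2*p)) (Set.Icc 0 (2*π))) :
    2^(2*p - 1) * (∫ s in (0:ℝ)..(2*π), (η s)^p)^2
      ≤ ∫ s₁ in (0:ℝ)..(2*π), ∫ s₂ in (0:ℝ)..(2*π), (η s₁ - η s₂)^(2*p) := by
  have hπ : (0:ℝ) < π := Real.pi_pos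
  have hT : (0:ℝ) < 2*π := by linarith
  -- integrability of all powers up to 2p
  have hInt : ∀ k, k ≤ 2*p → IntervalIntegrable (fun s => η s ^ k) volume 0 (2*π) := by
    intro k hk
    rw [intervalIntegrable_iff_integrableOn_Ioc_of_le hT.le]
    have hbound : IntegrableOn (fun s => 1 + |η s|^(2*p)) (Set.Ioc 0 (2*π)) := by
      apply Integrable.add
      · exact integrableOn_const (by simp [hT, ENNReal.mul_eq_top])
      · exact hint.mono_set Set.Ioc_subset_Icc_self
    apply Integrable.mono' hbound (hmeas.pow_const k).aestronglyMeasurable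
    filter_upwards with s
    rw [Real.norm_eq_abs, ← pow_abs]
    rcases le_or_gt (|η s|) 1 with h | h
    · have h1 : |η s| ^ k ≤ 1 := pow_le_one₀ (abs_nonneg _) h
      have h2 : (0:ℝ) ≤ |η s| ^ (2*p) := pow_nonneg (abs_nonneg _) _
      linarith
    · have h1 : |η s| ^ k ≤ |η s| ^ (2*p) := pow_le_pow_right₀ h.le hk
      linarith
  -- odd powers integrate to zero
  have hIodd : ∀ k, Odd k → k ≤ 2*p → (∫ s in (0:ℝ)..(2*π), η s ^ k) = 0 := by
    intro k hko hk
    set f : ℝ → ℝ := fun s => η s ^ k with hf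
    have hfper : Function.Periodic f (2*π) := fun s => by simp [hf, hper s]
    have hfodd : ∀ s, f (-s) = - f s := by
      intro s; simp only [hf, hodd s]; exact Odd.neg_pow hko _
    have hshift : (∫ s in (0:ℝ)..(2*π), f s) = ∫ s in (-π)..π, f s := by
      have := hfper.intervalIntegral_add_eq 0 (-π)
      rw [zero_add] at this
      rw [this]
      have he : -π + 2*π = π := by ring
      rw [he]
    have hint1 : IntervalIntegrable f volume 0 π := by
      apply (hInt k hk).mono_set
      rw [Set.uIcc_of_le hπ.le, Set.uIcc_of_le hT.le]
      exact Set.Icc_subset_Icc le_rfl (by linarith)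
    have hint2 : IntervalIntegrable f volume (-π) 0 := by
      have h3 : IntervalIntegrable f volume π (2*π) := by
        apply (hInt k hk).mono_set
        rw [Set.uIcc_of_le (by linarith : π ≤ 2*π), Set.uIcc_of_le hT.le]
        exact Set.Icc_subset_Icc hπ.le le_rfl
      have := h3.comp_add_right (2*π)
      have he : π - 2*π = -π := by ring
      have he2 : 2*π - 2*π = 0 := by ring
      rw [he, he2] at this
      exact this.congr_ae (Filter.EventuallyEq.of_eq (funext fun x => hfper x))
    have hneg : (∫ s in (-π)..(0:ℝ), f s) = - ∫ s in (0:ℝ)..π, f s := by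
      have h1 : (∫ x in (0:ℝ)..π, f (-x)) = ∫ x in (-π)..(-(0:ℝ)), f x :=
        intervalIntegral.integral_comp_neg f
      have h2 : (∫ x in (0:ℝ)..π, f (-x)) = ∫ x in (0:ℝ)..π, - f x :=
        intervalIntegral.integral_congr (fun x _ => hfodd x)
      rw [intervalIntegral.integral_neg] at h2
      rw [← h2, h1]; norm_num
    rw [hshift, ← intervalIntegral.integral_add_adjacent_intervals hint2 hint1, hneg]
    ring
  -- Cauchy-Schwarz step
  set μ : Measure ℝ := volume.restrict (Set.Ioc 0 (2*π)) with hμ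
  have hμint : ∀ k, k ≤ 2*p → Integrable (fun s => η s ^ k) μ := by
    intro k hk
    exact (intervalIntegrable_iff_integrableOn_Ioc_of_le hT.le).mp (hInt k hk)
  have hItoμ : ∀ g : ℝ → ℝ, (∫ s in (0:ℝ)..(2*π), g s) = ∫ s, g s ∂μ := by
    intro g; rw [intervalIntegral.integral_of_le hT.le]
  have hCS : ∀ j, j ≤ p →
      (∫ s in (0:ℝ)..(2*π), η s ^ p)^2
        ≤ (∫ s in (0:ℝ)..(2*π), η s ^ (2*j)) * (∫ s in (0:ℝ)..(2*π), η s ^ (2*(p-j))) := by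
    intro j hj
    set f : ℝ → ℝ := fun s => |η s| ^ j with hfd
    set g : ℝ → ℝ := fun s => |η s| ^ (p-j) with hgd
    have hpq : Real.HolderConjugate 2 2 := ⟨by norm_num, by norm_num, by norm_num⟩
    have h2 : ENNReal.ofReal (2:ℝ) = 2 := by
      rw [ENNReal.ofReal_ofNat]
    have memf : ∀ m, m ≤ p → MemLp (fun s => |η s| ^ m) (ENNReal.ofReal 2) μ := by
      intro m hm
      rw [h2]
      apply (memLp_two_iff_integrable_sq ((hmeas.abs.pow_const m).aestronglyMeasurable)).mpr
      apply (hμint (2*m) (by omega)).congr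
      filter_upwards with x
      rw [← pow_mul, ← Even.pow_abs (even_two_mul m), mul_comm m 2]
    have hfnn : 0 ≤ᵐ[μ] f := Filter.Eventually.of_forall fun x => pow_nonneg (abs_nonneg _) _
    have hgnn : 0 ≤ᵐ[μ] g := Filter.Eventually.of_forall fun x => pow_nonneg (abs_nonneg _) _
    have holder := MeasureTheory.integral_mul_le_Lp_mul_Lq_of_nonneg hpq hfnn hgnn
      (memf j hj) (memf (p-j) (by omega))
    have hfg : (∫ a, f a * g a ∂μ) = ∫ s in (0:ℝ)..(2*π), η s ^ p := by
      rw [hItoμ]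
      apply MeasureTheory.integral_congr_ae
      filter_upwards with x
      simp only [hfd, hgd, ← pow_add]
      rw [show j + (p - j) = p by omega, Even.pow_abs hpe]
    have hfsq : (∫ a, f a ^ (2:ℝ) ∂μ) = ∫ s in (0:ℝ)..(2*π), η s ^ (2*j) := by
      rw [hItoμ]
      apply MeasureTheory.integral_congr_ae
      filter_upwards with x
      rw [show (2:ℝ) = ((2:ℕ):ℝ) by norm_num, Real.rpow_natCast]
      show (|η x| ^ j) ^ (2:ℕ) = η x ^ (2*j)
      rw [← pow_mul, mul_comm j 2, Even.pow_abs (even_two_mul j)]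
    have hgsq : (∫ a, g a ^ (2:ℝ) ∂μ) = ∫ s in (0:ℝ)..(2*π), η s ^ (2*(p-j)) := by
      rw [hItoμ]
      apply MeasureTheory.integral_congr_ae
      filter_upwards with x
      rw [show (2:ℝ) = ((2:ℕ):ℝ) by norm_num, Real.rpow_natCast]
      show (|η x| ^ (p-j)) ^ (2:ℕ) = η x ^ (2*(p-j))
      rw [← pow_mul, mul_comm (p-j) 2, Even.pow_abs (even_two_mul (p-j))]
    set A := ∫ s in (0:ℝ)..(2*π), η s ^ (2*j) with hA
    set B := ∫ s in (0:ℝ)..(2*π), η s ^ (2*(p-j)) with hB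
    have hAnn : 0 ≤ A := by
      rw [hA, hItoμ]
      apply MeasureTheory.integral_nonneg
      intro x
      show (0:ℝ) ≤ η x ^ (2*j)
      rw [pow_mul]
      exact pow_nonneg (sq_nonneg _) _
    have hBnn : 0 ≤ B := by
      rw [hB, hItoμ]
      apply MeasureTheory.integral_nonneg
      intro x
      show (0:ℝ) ≤ η x ^ (2*(p-j))
      rw [pow_mul]
      exact pow_nonneg (sq_nonneg _) _
    have hfgnn : 0 ≤ ∫ a, f a * g a ∂μ :=
      MeasureTheory.integral_nonneg fun x => mul_nonneg (pow_nonneg (abs_nonneg _) _) (pow_nonneg (abs_nonneg _) _)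
    rw [hfsq, hgsq] at holder
    rw [← hfg]
    calc (∫ a, f a * g a ∂μ)^2 ≤ (A ^ ((1:ℝ)/2) * B ^ ((1:ℝ)/2))^2 :=
          pow_le_pow_left₀ hfgnn holder 2
      _ = A * B := by
          rw [mul_pow, ← Real.rpow_natCast (A ^ ((1:ℝ)/2)) 2, ← Real.rpow_natCast (B ^ ((1:ℝ)/2)) 2,
            ← Real.rpow_mul hAnn, ← Real.rpow_mul hBnn]
          norm_num
  -- expansion of the double integral
  set n := 2*p with hn
  set I : ℕ → ℝ := fun k => ∫ s in (0:ℝ)..(2*π), η s ^ k with hI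
  have inner : ∀ s₁ : ℝ, (∫ s₂ in (0:ℝ)..(2*π), (η s₁ - η s₂)^n)
      = ∑ m ∈ Finset.range (n+1), (-1:ℝ)^(m + n) * η s₁ ^ m * I (n - m) * (n.choose m : ℝ) := by
    intro s₁
    have hsub : ∀ s₂ : ℝ, (η s₁ - η s₂)^n = ∑ m ∈ Finset.range (n+1),
        (-1:ℝ)^(m+n) * η s₁ ^ m * η s₂ ^ (n-m) * (n.choose m : ℝ) := fun s₂ => sub_pow _ _ n
    rw [intervalIntegral.integral_congr (fun s₂ _ => hsub s₂)]
    rw [intervalIntegral.integral_finset_sum]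
    · apply Finset.sum_congr rfl
      intro m hm
      rw [intervalIntegral.integral_mul_const, intervalIntegral.integral_const_mul]
    · intro m hm
      exact ((hInt (n-m) (by omega)).const_mul _).mul_const _
  have expand : (∫ s₁ in (0:ℝ)..(2*π), ∫ s₂ in (0:ℝ)..(2*π), (η s₁ - η s₂)^n)
      = ∑ m ∈ Finset.range (n+1), (-1:ℝ)^(m + n) * I m * I (n - m) * (n.choose m : ℝ) := by
    rw [intervalIntegral.integral_congr (fun s₁ _ => inner s₁)]
    rw [intervalIntegral.integral_finset_sum]
    · apply Finset.sum_congr rfl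
      intro m hm
      rw [intervalIntegral.integral_mul_const, intervalIntegral.integral_mul_const,
        intervalIntegral.integral_const_mul]
    · intro m hm
      have hmn : m ≤ n := by
        have := Finset.mem_range.mp hm; omega
      exact (((hInt m (by omega)).const_mul _).mul_const _).mul_const _
  -- final combination
  have step : ∀ m ∈ Finset.range (n+1),
      (if Even m then ((n.choose m : ℝ)) else 0) * (∫ s in (0:ℝ)..(2*π), η s ^ p)^2
        ≤ (-1:ℝ)^(m + n) * I m * I (n - m) * (n.choose m : ℝ) := by
    intro m hm
    have hmn : m ≤ n := by
      have := Finset.mem_range.mp hm; omega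
    rcases Nat.even_or_odd m with he | ho
    · rw [if_pos he]
      have hsign : (-1:ℝ)^(m+n) = 1 := by
        apply Even.neg_one_pow
        exact he.add (by rw [hn]; exact even_two_mul p)
      obtain ⟨j, hj⟩ := he
      have hj2 : m = 2*j := by omega
      have hjp : j ≤ p := by omega
      have hnm : n - m = 2*(p - j) := by omega
      have hcs : (∫ s in (0:ℝ)..(2*π), η s ^ p)^2 ≤ I (2*j) * I (2*(p-j)) := hCS j hjp
      have hCnn : (0:ℝ) ≤ (n.choose m : ℝ) := Nat.cast_nonneg _
      rw [hsign, one_mul, hnm, hj2]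
      calc (n.choose (2*j) : ℝ) * (∫ s in (0:ℝ)..(2*π), η s ^ p)^2
          ≤ (n.choose (2*j) : ℝ) * (I (2*j) * I (2*(p-j))) := by
            apply mul_le_mul_of_nonneg_left hcs
            rw [← hj2]; exact hCnn
        _ = I (2*j) * I (2*(p-j)) * (n.choose (2*j) : ℝ) := by ring
    · rw [if_neg (Nat.not_even_iff_odd.mpr ho)]
      have h0 : I m = 0 := hIodd m ho hmn
      rw [h0]
      simp
  calc 2^(n-1) * (∫ s in (0:ℝ)..(2*π), η s ^ p)^2
      = (∑ m ∈ Finset.range (n+1), if Even m then ((n.choose m : ℝ)) else 0)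
          * (∫ s in (0:ℝ)..(2*π), η s ^ p)^2 := by
        rw [evenChooseSum n (by omega)]
    _ = ∑ m ∈ Finset.range (n+1),
          (if Even m then ((n.choose m : ℝ)) else 0) * (∫ s in (0:ℝ)..(2*π), η s ^ p)^2 := by
        rw [Finset.sum_mul]
    _ ≤ ∑ m ∈ Finset.range (n+1), (-1:ℝ)^(m + n) * I m * I (n - m) * (n.choose m : ℝ) :=
        Finset.sum_le_sum step
    _ = ∫ s₁ in (0:ℝ)..(2*π), ∫ s₂ in (0:ℝ)..(2*π), (η s₁ - η s₂)^n := expand.symm
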